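/- arXiv:1805.01766 — 4 statements merged into one kernel-verified Lean document; each statement's English description precedes it below -/
import Mathlib

section
/- Let u ∈ L¹(Ω) on a measure space Ω and let f, f_ν : Ω × ℝ → ℝ be measurable functions, all L-Lipschitz in the second variable uniformly in the first. Suppose that for every ω ∈ ℝ, f_ν(·,ω) → f(·,ω) in L¹_loc(Ω), and f_ν(·,0) → f(·,0) in L¹(Ω). Then ∫_Ω |f_ν(z, u(z)) − f(z, u(z))| dz → 0 as ν → ∞. -/
open MeasureTheory Filter

theorem stmt_4 {Ω : Type*} [MeasurableSpace Ω] (μ : Measure Ω) [SigmaFinite μ]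
    (L : ℝ) (u : Ω → ℝ) (hu : Integrable u μ)
    (f : Ω → ℝ → ℝ) (fν : ℕ → Ω → ℝ → ℝ)
    (hfmeas : Measurable (Function.uncurry f))
    (hfνmeas : ∀ ν, Measurable (Function.uncurry (fν ν)))
    (hfLip : ∀ z ω₁ ω₂, |f z ω₁ - f z ω₂| ≤ L * |ω₁ - ω₂|)
    (hfνLip : ∀ ν z ω₁ ω₂, |fν ν z ω₁ - fν ν z ω₂| ≤ L * |ω₁ - ω₂|)
    (hloc : ∀ (ω : ℝ) (s : Set Ω), MeasurableSet s → μ s < ⊤ →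
      Tendsto (fun ν => ∫ z in s, |fν ν z ω - f z ω| ∂μ) atTop (nhds 0))
    (h0 : Tendsto (fun ν => ∫ z, |fν ν z 0 - f z 0| ∂μ) atTop (nhds 0)) :
    Tendsto (fun ν => ∫ z, |fν ν z (u z) - f z (u z)| ∂μ) atTop (nhds 0) := by
  -- replace L by |L|
  set L' : ℝ := |L| with hL'def
  have hL0 : 0 ≤ L' := abs_nonneg L
  have hfLip' : ∀ z ω₁ ω₂, |f z ω₁ - f z ω₂| ≤ L' * |ω₁ - ω₂| := fun z a b =>
    (hfLip z a b).trans (mul_le_mul_of_nonneg_right (le_abs_self L) (abs_nonneg _))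
  have hfνLip' : ∀ ν z ω₁ ω₂, |fν ν z ω₁ - fν ν z ω₂| ≤ L' * |ω₁ - ω₂| := fun ν z a b =>
    (hfνLip ν z a b).trans (mul_le_mul_of_nonneg_right (le_abs_self L) (abs_nonneg _))
  -- key triangle inequality
  have key : ∀ ν z a b, |fν ν z a - f z a| ≤ 2 * L' * |a - b| + |fν ν z b - f z b| := by
    intro ν z a b
    have h1 := hfνLip' ν z a b
    have h2 := hfLip' z b a
    have h3 := abs_sub_le (fν ν z a) (fν ν z b) (f z a)
    have h4 := abs_sub_le (fν ν z b) (f z b) (f z a)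
    have h5 : |b - a| = |a - b| := abs_sub_comm b a
    nlinarith [abs_nonneg (a - b)]
  -- measurable version of u
  set v : Ω → ℝ := hu.1.mk u with hvdef
  have hv : Measurable v := hu.1.measurable_mk
  have huv : u =ᵐ[μ] v := hu.1.ae_eq_mk
  have hvi : Integrable v μ := hu.congr huv
  have hred : (fun ν => ∫ z, |fν ν z (u z) - f z (u z)| ∂μ)
      = fun ν => ∫ z, |fν ν z (v z) - f z (v z)| ∂μ :=
    funext fun ν => integral_congr_ae (huv.mono fun z hz => by simp only [hz])
  rw [hred]
  have measAt : ∀ (g : Ω → ℝ → ℝ), Measurable (Function.uncurry g) → ∀ {w : Ω → ℝ},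
      Measurable w → Measurable fun z => g z (w z) :=
    fun g hg _ hw => hg.comp (measurable_id.prodMk hw)
  -- suffices: eventually < ε
  have main : ∀ ε > (0:ℝ), ∀ᶠ ν in atTop, ∫ z, |fν ν z (v z) - f z (v z)| ∂μ < ε := by
    intro ε hε
    -- choose δ₀ and simple function s
    set δ₀ : ℝ := ε / (2 * (2 * L' + 1)) with hδ₀def
    have hden : (0:ℝ) < 2 * (2 * L' + 1) := by nlinarith
    have hδ₀ : 0 < δ₀ := div_pos hε hden
    have hne : ENNReal.ofReal δ₀ ≠ 0 := by
      simp only [ne_eq, ENNReal.ofReal_eq_zero, not_le]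
      exact hδ₀
    obtain ⟨s, hs_lt, hs_mem⟩ :=
      (memLp_one_iff_integrable.2 hvi).exists_simpleFunc_eLpNorm_sub_lt (by simp) hne
    have hsi : Integrable s μ := memLp_one_iff_integrable.1 hs_mem
    have hvs : Integrable (fun z => v z - s z) μ := hvi.sub hsi
    have hIv : ∫ z, |v z - s z| ∂μ < δ₀ := by
      have e2 : ∫ z, |v z - s z| ∂μ = (∫⁻ z, ‖v z - s z‖₊ ∂μ).toReal := by
        simpa [Real.norm_eq_abs, enorm_eq_nnnorm] using
          integral_norm_eq_lintegral_enorm (f := fun z => v z - s z) hvs.1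
      have e1 : eLpNorm (v - ⇑s) 1 μ = ∫⁻ z, ‖v z - s z‖₊ ∂μ := by
        rw [eLpNorm_one_eq_lintegral_enorm]; rfl
      rw [e2, ← e1]
      exact ENNReal.toReal_lt_of_lt_ofReal hs_lt
    set K : ℕ := s.range.card with hKdef
    set δ₁ : ℝ := ε / (2 * ((K : ℝ) + 1)) with hδ₁def
    have hden1 : (0:ℝ) < 2 * ((K : ℝ) + 1) := by positivity
    have hδ₁ : 0 < δ₁ := div_pos hε hden1
    have hA : 2 * L' * δ₀ = ε / 2 - δ₀ := by
      rw [hδ₀def]; field_simp; ring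
    have hB : (K : ℝ) * δ₁ = ε / 2 - δ₁ := by
      rw [hδ₁def]; field_simp; ring
    -- eventual smallness of hypotheses
    have Hev : ∀ᶠ ν in atTop,
        (∀ ω ∈ s.range, ω ≠ 0 → ∫ z in ⇑s ⁻¹' {ω}, |fν ν z ω - f z ω| ∂μ < δ₁) ∧
          ∫ z, |fν ν z 0 - f z 0| ∂μ < δ₁ := by
      refine Eventually.and ?_ (h0.eventually_lt_const hδ₁)
      rw [eventually_all_finset]
      intro ω hω
      by_cases hω0 : ω = 0
      · exact Eventually.of_forall fun ν h => absurd hω0 h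
      · exact ((hloc ω _ (s.measurableSet_fiber ω)
          (s.measure_preimage_lt_top_of_integrable hsi hω0)).eventually_lt_const
            hδ₁).mono fun ν h _ => h
    filter_upwards [Hev] with ν hν
    obtain ⟨h1, h2⟩ := hν
    by_cases hd0 : Integrable (fun z => fν ν z 0 - f z 0) μ
    · -- good case
      have hd0a : Integrable (fun z => |fν ν z 0 - f z 0|) μ := hd0.abs
      have hGmeas : Measurable fun z => |fν ν z (s z) - f z (s z)| :=
        ((measAt _ (hfνmeas ν) s.measurable).sub (measAt _ hfmeas s.measurable)).abs
      have hGi : Integrable (fun z => |fν ν z (s z) - f z (s z)|) μ := by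
        refine (((hsi.abs).const_mul (2 * L')).add hd0a).mono'
          hGmeas.aestronglyMeasurable (Eventually.of_forall fun z => ?_)
        rw [Real.norm_eq_abs, abs_abs]
        have := key ν z (s z) 0
        rw [sub_zero] at this
        exact this
      have hFmeas : Measurable fun z => |fν ν z (v z) - f z (v z)| :=
        ((measAt _ (hfνmeas ν) hv).sub (measAt _ hfmeas hv)).abs
      have hFi : Integrable (fun z => |fν ν z (v z) - f z (v z)|) μ := by
        refine (((hvi.abs).const_mul (2 * L')).add hd0a).mono'
          hFmeas.aestronglyMeasurable (Eventually.of_forall fun z => ?_)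
        rw [Real.norm_eq_abs, abs_abs]
        have := key ν z (v z) 0
        rw [sub_zero] at this
        exact this
      have hvsInt : Integrable (fun z => 2 * L' * |v z - s z|) μ := (hvs.abs).const_mul _
      have step1 : ∫ z, |fν ν z (v z) - f z (v z)| ∂μ
          ≤ ∫ z, (2 * L' * |v z - s z| + |fν ν z (s z) - f z (s z)|) ∂μ :=
        integral_mono hFi (hvsInt.add hGi) fun z => key ν z (v z) (s z)
      rw [integral_add hvsInt hGi, integral_const_mul] at step1
      -- split ∫ G over the fibers of s
      have hpart : (fun z => |fν ν z (s z) - f z (s z)|)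
          = fun z => ∑ ω ∈ s.range, (⇑s ⁻¹' {ω}).indicator (fun z => |fν ν z ω - f z ω|) z := by
        funext z
        rw [Finset.sum_eq_single_of_mem (s z) (s.mem_range_self z)]
        · exact (Set.indicator_of_mem (show z ∈ ⇑s ⁻¹' {s z} from rfl)
            fun y => |fν ν y (s z) - f y (s z)|).symm
        · intro ω _ hne
          refine Set.indicator_of_notMem ?_ _
          intro h
          exact hne (Set.mem_singleton_iff.mp h).symm
      have hIOn : ∀ ω ∈ s.range,
          IntegrableOn (fun z => |fν ν z ω - f z ω|) (⇑s ⁻¹' {ω}) μ := by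
        intro ω hω
        by_cases hω0 : ω = 0
        · subst hω0; exact hd0a.integrableOn
        · refine ((hd0a.restrict).add
            ((integrableOn_const_iff (C := 2 * L' * |ω|)).2
              (Or.inr (s.measure_preimage_lt_top_of_integrable hsi hω0)))).mono'
              (((measAt _ (hfνmeas ν) measurable_const).sub
                (measAt _ hfmeas measurable_const)).abs.aestronglyMeasurable.restrict)
              (Eventually.of_forall fun z => ?_)
          simp only [Pi.add_apply, Real.norm_eq_abs, abs_abs]
          have := key ν z ω 0
          rw [sub_zero] at this
          linarith
      have hGsum : ∫ z, |fν ν z (s z) - f z (s z)| ∂μ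
          = ∑ ω ∈ s.range, ∫ z in ⇑s ⁻¹' {ω}, |fν ν z ω - f z ω| ∂μ := by
        rw [hpart, integral_finset_sum]
        · exact Finset.sum_congr rfl fun ω _ =>
            integral_indicator (s.measurableSet_fiber ω)
        · intro ω hω
          rw [integrable_indicator_iff (s.measurableSet_fiber ω)]
          exact hIOn ω hω
      have hterm : ∀ ω ∈ s.range, ∫ z in ⇑s ⁻¹' {ω}, |fν ν z ω - f z ω| ∂μ ≤ δ₁ := by
        intro ω hω
        by_cases hω0 : ω = 0
        · subst hω0
          exact le_of_lt (lt_of_le_of_lt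
            (setIntegral_le_integral hd0a (Eventually.of_forall fun z => abs_nonneg _)) h2)
        · exact (h1 ω hω hω0).le
      have hsum : ∑ ω ∈ s.range, ∫ z in ⇑s ⁻¹' {ω}, |fν ν z ω - f z ω| ∂μ ≤ (K : ℝ) * δ₁ := by
        calc ∑ ω ∈ s.range, ∫ z in ⇑s ⁻¹' {ω}, |fν ν z ω - f z ω| ∂μ
            ≤ s.range.card • δ₁ := Finset.sum_le_card_nsmul _ _ _ hterm
          _ = (K : ℝ) * δ₁ := by rw [nsmul_eq_mul, hKdef]
      have m1 : 2 * L' * ∫ z, |v z - s z| ∂μ ≤ 2 * L' * δ₀ :=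
        mul_le_mul_of_nonneg_left hIv.le (by positivity)
      rw [hGsum] at step1
      linarith
    · -- junk case: the integrand is not integrable, so the integral is 0
      have hFmeas : Measurable fun z => |fν ν z (v z) - f z (v z)| :=
        ((measAt _ (hfνmeas ν) hv).sub (measAt _ hfmeas hv)).abs
      have hnot : ¬ Integrable (fun z => |fν ν z (v z) - f z (v z)|) μ := by
        intro hFi
        apply hd0
        refine (hFi.add ((hvi.abs).const_mul (2 * L'))).mono'
          ((measAt _ (hfνmeas ν) measurable_const).sub
            (measAt _ hfmeas measurable_const)).aestronglyMeasurable
          (Eventually.of_forall fun z => ?_)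
        simp only [Pi.add_apply, Real.norm_eq_abs]
        have := key ν z 0 (v z)
        rw [zero_sub, abs_neg] at this
        linarith
      rw [integral_undef hnot]
      exact hε
  rw [Metric.tendsto_atTop]
  intro ε hε
  obtain ⟨N, hN⟩ := eventually_atTop.1 (main ε hε)
  refine ⟨N, fun n hn => ?_⟩
  rw [Real.dist_eq, sub_zero, abs_of_nonneg (integral_nonneg fun z => abs_nonneg _)]
  exact hN n hn
end

section
/- Let u_n, u ∈ L¹(ℝ) with 0 ≤ u_n ≤ 1 and define U_n(x) = ∫_{−∞}^x u_n(y) dy, U(x) = ∫_{−∞}^x u(y) dy. Assume the family {u_n} is tight: for every δ > 0 there is M with ∫_{|x|>M} u_n(x) dx < δ for all n. Then u_n ⇀ u weakly in L¹(ℝ) if and only if U_n → U uniformly on ℝ. -/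
open MeasureTheory Filter Set
open scoped ENNReal NNReal

private lemma tailSmall (g : ℝ → ℝ) (hg : Integrable g) (hg0 : ∀ x, 0 ≤ g x) {ε : ℝ}
    (hε : 0 < ε) : ∃ M > (0:ℝ), (∫ x in {x : ℝ | M < |x|}, g x) < ε := by
  have hmono : Monotone (fun R : ℕ => Set.Icc (-(R:ℝ)) R) := by
    intro m n hmn
    exact Set.Icc_subset_Icc (by simp; exact_mod_cast hmn) (by exact_mod_cast hmn)
  have hunion : (⋃ R : ℕ, Set.Icc (-(R:ℝ)) R) = Set.univ := by
    ext x; simp only [Set.mem_iUnion, Set.mem_Icc, Set.mem_univ, iff_true]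
    obtain ⟨n, hn⟩ := exists_nat_ge |x|
    exact ⟨n, neg_le_of_abs_le hn, le_of_abs_le hn⟩
  have h := tendsto_setIntegral_of_monotone (fun R : ℕ => measurableSet_Icc) hmono
    (by rw [hunion]; exact hg.integrableOn)
  rw [hunion, setIntegral_univ] at h
  obtain ⟨R, hR⟩ := ((tendsto_order.1 h).1 ((∫ x, g x) - ε) (by linarith)).exists
  refine ⟨R + 1, by positivity, ?_⟩
  have hcompl : {x : ℝ | (R:ℝ)+1 < |x|} ⊆ (Set.Icc (-(R:ℝ)) R)ᶜ := by
    intro x hx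
    simp only [Set.mem_setOf_eq] at hx
    simp only [Set.mem_compl_iff, Set.mem_Icc, not_and_or, not_le]
    rcases abs_cases x with ⟨h1, _⟩ | ⟨h1, _⟩
    · right; linarith
    · left; linarith
  have h2 : (∫ x in {x : ℝ | (R:ℝ)+1 < |x|}, g x) ≤ ∫ x in (Set.Icc (-(R:ℝ)) R)ᶜ, g x :=
    setIntegral_mono_set hg.integrableOn
      (Filter.Eventually.of_forall fun x => hg0 x) (HasSubset.Subset.eventuallyLE hcompl)
  have h3 := integral_add_compl (measurableSet_Icc (a := -(R:ℝ)) (b := R)) hg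
  linarith

private lemma incr {f : ℝ → ℝ} (hf : Integrable f) {a b : ℝ} (hab : a ≤ b) :
    (∫ y in Set.Iic b, f y) - ∫ y in Set.Iic a, f y = ∫ y in Set.Ioc a b, f y := by
  rw [← Iic_union_Ioc_eq_Iic hab, setIntegral_union (Iic_disjoint_Ioc le_rfl)
    measurableSet_Ioc hf.integrableOn hf.integrableOn]
  ring

private lemma keyCont (u : ℕ → ℝ → ℝ) (ulim : ℝ → ℝ)
    (hint : ∀ n, Integrable (u n)) (hlimint : Integrable ulim)
    (h0 : ∀ n x, 0 ≤ u n x) (h1 : ∀ n x, u n x ≤ 1)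
    (hpt : ∀ x : ℝ, Tendsto (fun n => ∫ y in Set.Iic x, u n y) atTop
      (nhds (∫ y in Set.Iic x, ulim y)))
    (g : ℝ → ℝ) (hgc : Continuous g) (hgsupp : HasCompactSupport g) :
    Tendsto (fun n => ∫ x, u n x * g x) atTop (nhds (∫ x, ulim x * g x)) := by
  -- bound for g
  obtain ⟨Cg, hCg⟩ := hgc.bounded_above_of_compact_support hgsupp
  obtain ⟨R, hRpos, hgz⟩ : ∃ R : ℝ, 0 < R ∧ ∀ x : ℝ, x ∉ Set.Ioc (-R) R → g x = 0 := by
    obtain ⟨r, hr⟩ := hgsupp.isBounded.subset_closedBall 0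
    refine ⟨max r 0 + 1, by positivity, ?_⟩
    intro x hx
    by_contra hgx
    have hx' : x ∈ Metric.closedBall (0:ℝ) r := hr (subset_tsupport g hgx)
    simp only [Metric.mem_closedBall, Real.dist_eq, sub_zero] at hx'
    simp only [Set.mem_Ioc, not_and_or, not_lt, not_le] at hx
    rcases hx with h | h
    · linarith [neg_le_abs x, le_max_left r 0]
    · linarith [le_abs_self x, le_max_left r 0]
  -- integrability of u n * g etc.
  have hintg : ∀ f : ℝ → ℝ, Integrable f → Integrable (fun x => f x * g x) := by
    intro f hf
    have := hf.bdd_mul hgc.aestronglyMeasurable (Eventually.of_forall hCg)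
    simpa [mul_comm] using this
  have huc : UniformContinuous g :=
    hgc.uniformContinuous_of_tendsto_cocompact hgsupp.is_zero_at_infty
  rw [Metric.tendsto_nhds]
  intro ε hε
  set L : ℝ := ∫ x, |ulim x| with hL
  have hL0 : 0 ≤ L := integral_nonneg (fun x => abs_nonneg _)
  set ε₃ : ℝ := ε / (3 * (2*R + L + 1)) with hε₃
  have hε₃pos : 0 < ε₃ := by
    apply div_pos hε
    nlinarith
  obtain ⟨δ, hδpos, hδ⟩ := Metric.uniformContinuous_iff.mp huc ε₃ hε₃pos
  obtain ⟨k, hk⟩ := exists_nat_gt ((2*R)/δ)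
  have hk0 : 0 < (k:ℝ) := lt_trans (by positivity) hk
  set h₀ : ℝ := (2*R)/k with hh₀
  have hhpos : 0 < h₀ := by positivity
  have hhlt : h₀ < δ := by
    rw [hh₀, div_lt_iff₀ hk0]
    have := (div_lt_iff₀ hδpos).mp hk
    linarith
  set t : ℕ → ℝ := fun i => -R + i * h₀ with ht
  have htmono : ∀ i j : ℕ, i ≤ j → t i ≤ t j := by
    intro i j hij
    simp only [ht]
    have : (i:ℝ) ≤ j := by exact_mod_cast hij
    nlinarith
  have htk : t k = R := by
    simp only [ht, hh₀]
    field_simp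
    ring
  have htsub : ∀ i : ℕ, i < k → Set.Ioc (t i) (t (i+1)) ⊆ Set.Ioc (-R) R := by
    intro i hik
    apply Set.Ioc_subset_Ioc
    · have := htmono 0 i (Nat.zero_le i)
      simpa [ht] using this
    · have := htmono (i+1) k hik
      rwa [htk] at this
  set s : ℝ → ℝ := fun x => ∑ i ∈ Finset.range k,
    g (t i) * Set.indicator (Set.Ioc (t i) (t (i+1))) (fun _ => (1:ℝ)) x with hs
  have hsout : ∀ x : ℝ, x ∉ Set.Ioc (-R) R → s x = 0 := by
    intro x hx
    simp only [hs]
    apply Finset.sum_eq_zero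
    intro i hi
    rw [Set.indicator_of_notMem (fun hmem => hx (htsub i (Finset.mem_range.mp hi) hmem))]
    ring
  -- approximation bound
  have hgs : ∀ x : ℝ, |g x - s x| ≤ ε₃ := by
    intro x
    by_cases hx : x ∈ Set.Ioc (-R) R
    · obtain ⟨hx1, hx2⟩ := hx
      have hxR : 0 < x + R := by linarith
      set c : ℕ := ⌈(x+R)/h₀⌉₊ with hc
      have hc1 : 1 ≤ c := Nat.one_le_iff_ne_zero.mpr (by
        simp only [hc, Ne, Nat.ceil_eq_zero, not_le]
        positivity)
      set j : ℕ := c - 1 with hj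
      have hjc : j + 1 = c := Nat.succ_pred_eq_of_pos hc1
      have hjcast : (j:ℝ) = (c:ℝ) - 1 := by
        have : ((j:ℕ) + 1 : ℝ) = c := by exact_mod_cast congrArg (Nat.cast : ℕ → ℝ) hjc
        push_cast at this ⊢
        linarith
      have hup : x ≤ t (j+1) := by
        have h1 : (x+R)/h₀ ≤ c := Nat.le_ceil _
        have h2 : x + R ≤ (c:ℝ) * h₀ := (div_le_iff₀ hhpos).mp h1
        simp only [ht]
        rw [hjc]
        linarith
      have hlo : t j < x := by
        have h1 : (c:ℝ) < (x+R)/h₀ + 1 := by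
          have := Nat.ceil_lt_add_one (le_of_lt (by positivity : (0:ℝ) < (x+R)/h₀))
          exact_mod_cast this
        have h2 : (j:ℝ) < (x+R)/h₀ := by rw [hjcast]; linarith
        have h3 : (j:ℝ) * h₀ < x + R := (lt_div_iff₀ hhpos).mp h2 |>.le.lt_of_ne ?_
        · simp only [ht]; linarith
        · intro heq
          have := (lt_div_iff₀ hhpos).mp h2
          linarith
      have hjk : j < k := by
        have h1 : (x+R)/h₀ ≤ (k:ℝ) := by
          rw [div_le_iff₀ hhpos, hh₀]
          field_simp
          linarith
        have h2 : c ≤ k := Nat.ceil_le.mpr (by exact_mod_cast h1)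
        omega
      have hmem : x ∈ Set.Ioc (t j) (t (j+1)) := ⟨hlo, hup⟩
      have hsx : s x = g (t j) := by
        simp only [hs]
        rw [Finset.sum_eq_single_of_mem j (Finset.mem_range.mpr hjk)]
        · rw [Set.indicator_of_mem hmem]; ring
        · intro i hi hij
          rw [Set.indicator_of_notMem, mul_zero]
          intro hmem'
          rcases lt_or_gt_of_ne hij with hlt | hgt
          · exact absurd hmem'.2 (not_le.mpr (lt_of_le_of_lt (htmono (i+1) j hlt) hlo))
          · exact absurd hmem'.1 (not_lt.mpr (le_trans hup (htmono (j+1) i hgt)))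
      rw [hsx]
      have hdist : dist x (t j) < δ := by
        rw [Real.dist_eq, abs_of_pos (by linarith)]
        have : t (j+1) = t j + h₀ := by simp only [ht]; push_cast; ring
        rw [this] at hup
        linarith
      exact (le_of_lt (by simpa [Real.dist_eq] using hδ hdist))
    · rw [hgz x hx, hsout x hx]
      simpa using hε₃pos.le
  -- integral against step function
  have hind : ∀ (f : ℝ → ℝ) (i : ℕ), (fun x => f x * (g (t i) *
      Set.indicator (Set.Ioc (t i) (t (i+1))) (fun _ => (1:ℝ)) x)) =
      fun x => g (t i) * Set.indicator (Set.Ioc (t i) (t (i+1))) f x := by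
    intro f i
    funext x
    by_cases hx : x ∈ Set.Ioc (t i) (t (i+1)) <;>
      simp [Set.indicator_apply, hx, mul_comm]
  have hsint : ∀ f : ℝ → ℝ, Integrable f → Integrable (fun x => f x * s x) := by
    intro f hf
    have : (fun x => f x * s x) = fun x => ∑ i ∈ Finset.range k,
        g (t i) * Set.indicator (Set.Ioc (t i) (t (i+1))) f x := by
      funext x
      simp only [hs, Finset.mul_sum]
      exact Finset.sum_congr rfl fun i _ => congrFun (hind f i) x
    rw [this]
    exact integrable_finset_sum _ fun i _ =>
      ((hf.indicator measurableSet_Ioc).const_mul _)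
  have hsum : ∀ f : ℝ → ℝ, Integrable f → (∫ x, f x * s x) =
      ∑ i ∈ Finset.range k, g (t i) * ∫ y in Set.Ioc (t i) (t (i+1)), f y := by
    intro f hf
    have heq : (fun x => f x * s x) = fun x => ∑ i ∈ Finset.range k,
        g (t i) * Set.indicator (Set.Ioc (t i) (t (i+1))) f x := by
      funext x
      simp only [hs, Finset.mul_sum]
      exact Finset.sum_congr rfl fun i _ => congrFun (hind f i) x
    rw [heq, integral_finset_sum _ fun i _ => ((hf.indicator measurableSet_Ioc).const_mul _)]
    refine Finset.sum_congr rfl fun i _ => ?_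
    rw [integral_const_mul, integral_indicator measurableSet_Ioc]
  -- convergence of step integrals
  have htendS : Tendsto (fun n => ∑ i ∈ Finset.range k, g (t i) *
      ∫ y in Set.Ioc (t i) (t (i+1)), u n y) atTop
      (nhds (∑ i ∈ Finset.range k, g (t i) * ∫ y in Set.Ioc (t i) (t (i+1)), ulim y)) := by
    apply tendsto_finset_sum
    intro i _
    have h1 : ∀ n, (∫ y in Set.Ioc (t i) (t (i+1)), u n y) =
        (∫ y in Set.Iic (t (i+1)), u n y) - ∫ y in Set.Iic (t i), u n y :=
      fun n => (incr (hint n) (htmono i (i+1) (Nat.le_succ i))).symm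
    have h2 : (∫ y in Set.Ioc (t i) (t (i+1)), ulim y) =
        (∫ y in Set.Iic (t (i+1)), ulim y) - ∫ y in Set.Iic (t i), ulim y :=
      (incr hlimint (htmono i (i+1) (Nat.le_succ i))).symm
    simp only [h1, h2]
    exact ((hpt (t (i+1))).sub (hpt (t i))).const_mul _
  -- error bounds
  have hb1 : ∀ n, |(∫ x, u n x * g x) - ∫ x, u n x * s x| ≤ ε₃ * (2*R) := by
    intro n
    rw [← integral_sub (hintg (u n) (hint n)) (hsint (u n) (hint n))]
    have hptw : ∀ x, |u n x * g x - u n x * s x| ≤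
        ε₃ * Set.indicator (Set.Ioc (-R) R) (fun _ => (1:ℝ)) x := by
      intro x
      rw [← mul_sub, abs_mul, abs_of_nonneg (h0 n x)]
      by_cases hx : x ∈ Set.Ioc (-R) R
      · rw [Set.indicator_of_mem hx]
        calc u n x * |g x - s x| ≤ 1 * ε₃ :=
          mul_le_mul (h1 n x) (hgs x) (abs_nonneg _) zero_le_one
        _ = ε₃ * 1 := by ring
      · rw [Set.indicator_of_notMem hx, hgz x hx, hsout x hx]
        simp
    calc |∫ x, (u n x * g x - u n x * s x)| ≤ ∫ x, |u n x * g x - u n x * s x| := by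
          simpa using norm_integral_le_integral_norm (fun x => u n x * g x - u n x * s x)
      _ ≤ ∫ x, ε₃ * Set.indicator (Set.Ioc (-R) R) (fun _ => (1:ℝ)) x := by
          apply integral_mono ((hintg (u n) (hint n)).sub (hsint (u n) (hint n))).abs
            (((integrable_indicator_iff measurableSet_Ioc).mpr
              (integrableOn_const (by simp [Real.volume_Ioc]))).const_mul ε₃) hptw
      _ = ε₃ * (2*R) := by
          rw [integral_const_mul, integral_indicator measurableSet_Ioc, setIntegral_const,
            smul_eq_mul, mul_one, measureReal_def, Real.volume_Ioc,
            ENNReal.toReal_ofReal (by linarith : (0:ℝ) ≤ R - -R)]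
          ring
  have hb2 : |(∫ x, ulim x * g x) - ∫ x, ulim x * s x| ≤ ε₃ * L := by
    rw [← integral_sub (hintg ulim hlimint) (hsint ulim hlimint)]
    have hptw : ∀ x, |ulim x * g x - ulim x * s x| ≤ ε₃ * |ulim x| := by
      intro x
      rw [← mul_sub, abs_mul]
      calc |ulim x| * |g x - s x| ≤ |ulim x| * ε₃ :=
        mul_le_mul_of_nonneg_left (hgs x) (abs_nonneg _)
      _ = ε₃ * |ulim x| := by ring
    calc |∫ x, (ulim x * g x - ulim x * s x)| ≤ ∫ x, |ulim x * g x - ulim x * s x| := by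
          simpa using norm_integral_le_integral_norm (fun x => ulim x * g x - ulim x * s x)
      _ ≤ ∫ x, ε₃ * |ulim x| := integral_mono
          ((hintg ulim hlimint).sub (hsint ulim hlimint)).abs (hlimint.abs.const_mul ε₃) hptw
      _ = ε₃ * L := by rw [integral_const_mul, hL]
  -- assemble
  have hev := Metric.tendsto_nhds.mp htendS (ε/3) (by linarith)
  filter_upwards [hev] with n hn
  rw [Real.dist_eq]
  rw [Real.dist_eq] at hn
  rw [← hsum (u n) (hint n), ← hsum ulim hlimint] at hn
  have key : ε₃ * (2*R) + ε₃ * L ≤ ε/3 := by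
    have hden : (0:ℝ) < 2*R + L + 1 := by linarith
    have h1 : ε₃ * (2*R + L + 1) = ε/3 := by
      rw [hε₃]
      field_simp
    nlinarith
  calc |(∫ x, u n x * g x) - ∫ x, ulim x * g x| ≤
      |(∫ x, u n x * g x) - ∫ x, u n x * s x| +
      |(∫ x, u n x * s x) - ∫ x, ulim x * s x| +
      |(∫ x, ulim x * s x) - ∫ x, ulim x * g x| := by
        have := abs_sub_le (∫ x, u n x * g x) (∫ x, u n x * s x) (∫ x, ulim x * g x)
        have := abs_sub_le (∫ x, u n x * s x) (∫ x, ulim x * s x) (∫ x, ulim x * g x)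
        linarith
    _ < ε := by
        have := hb1 n
        have := hb2
        rw [abs_sub_comm] at this
        linarith

theorem stmt_10 (u : ℕ → ℝ → ℝ) (ulim : ℝ → ℝ)
    (hint : ∀ n, Integrable (u n)) (hlimint : Integrable ulim)
    (h0 : ∀ n x, 0 ≤ u n x) (h1 : ∀ n x, u n x ≤ 1)
    (htight : ∀ δ > (0 : ℝ), ∃ M > (0 : ℝ), ∀ n,
      (∫ x in {x : ℝ | M < |x|}, u n x) < δ) :
    (∀ φ : ℝ → ℝ, Measurable φ → (∃ C : ℝ, ∀ x, |φ x| ≤ C) →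
        Tendsto (fun n => ∫ x, u n x * φ x) atTop (nhds (∫ x, ulim x * φ x))) ↔
    TendstoUniformly (fun n x => ∫ y in Set.Iic x, u n y)
      (fun x => ∫ y in Set.Iic x, ulim y) atTop := by
  set U : ℕ → ℝ → ℝ := fun n x => ∫ y in Set.Iic x, u n y with hUdef
  set V : ℝ → ℝ := fun x => ∫ y in Set.Iic x, ulim y with hVdef
  have hincr : ∀ n (a b : ℝ), a ≤ b → U n b - U n a = ∫ y in Set.Ioc a b, u n y := by
    intro n a b hab
    rw [hUdef]
    simp only
    rw [← Iic_union_Ioc_eq_Iic hab, setIntegral_union (Iic_disjoint_Ioc le_rfl)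
      measurableSet_Ioc (hint n).integrableOn (hint n).integrableOn]
    ring
  have hlip : ∀ n (a b : ℝ), a ≤ b → 0 ≤ U n b - U n a ∧ U n b - U n a ≤ b - a := by
    intro n a b hab
    rw [hincr n a b hab]
    constructor
    · exact setIntegral_nonneg measurableSet_Ioc (fun x _ => h0 n x)
    · calc (∫ y in Set.Ioc a b, u n y) ≤ ∫ _ in Set.Ioc a b, (1:ℝ) :=
            setIntegral_mono_on (hint n).integrableOn
              (integrableOn_const (by simp [Real.volume_Ioc])) measurableSet_Ioc
              (fun x _ => h1 n x)
        _ = b - a := by simp [Real.volume_Ioc, ENNReal.toReal_ofReal (sub_nonneg.2 hab), hab]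
  have hUnonneg : ∀ n x, 0 ≤ U n x := fun n x =>
    setIntegral_nonneg measurableSet_Iic (fun y _ => h0 n y)
  constructor
  · intro h
    have hpt : ∀ x₀ : ℝ, Tendsto (fun n => U n x₀) atTop (nhds (V x₀)) := by
      intro x₀
      have hφ : Measurable (Set.indicator (Set.Iic x₀) (fun _ => (1:ℝ))) :=
        measurable_const.indicator measurableSet_Iic
      have hb : ∃ C : ℝ, ∀ x, |Set.indicator (Set.Iic x₀) (fun _ => (1:ℝ)) x| ≤ C :=
        ⟨1, fun x => by by_cases hx : x ∈ Set.Iic x₀ <;> simp [Set.indicator_apply, hx]⟩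
      have key := h _ hφ hb
      have heq : ∀ f : ℝ → ℝ, (∫ x, f x * Set.indicator (Set.Iic x₀) (fun _ => (1:ℝ)) x)
          = ∫ y in Set.Iic x₀, f y := by
        intro f
        rw [← integral_indicator measurableSet_Iic]
        congr 1
        ext x
        by_cases hx : x ∈ Set.Iic x₀ <;> simp [Set.indicator_apply, hx]
      simpa only [heq] using key
    have hVlip : ∀ (a b : ℝ), a ≤ b → 0 ≤ V b - V a ∧ V b - V a ≤ b - a := by
      intro a b hab
      have htend : Tendsto (fun n => U n b - U n a) atTop (nhds (V b - V a)) :=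
        (hpt b).sub (hpt a)
      constructor
      · exact le_of_tendsto_of_tendsto tendsto_const_nhds htend
          (Eventually.of_forall fun n => (hlip n a b hab).1)
      · exact le_of_tendsto_of_tendsto htend tendsto_const_nhds
          (Eventually.of_forall fun n => (hlip n a b hab).2)
    have hVnonneg : ∀ x, 0 ≤ V x := fun x =>
      le_of_tendsto_of_tendsto tendsto_const_nhds (hpt x)
        (Eventually.of_forall fun n => hUnonneg n x)
    rw [Metric.tendstoUniformly_iff]
    intro ε hε
    obtain ⟨M, hM0, hMt⟩ := htight (ε/4) (by linarith)
    have hmeasT : MeasurableSet {x : ℝ | M < |x|} :=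
      measurableSet_lt measurable_const measurable_abs
    -- tail bounds for U
    have htail1 : ∀ n (x : ℝ), x ≤ -M - 1 → U n x ≤ ε/4 := by
      intro n x hx
      have hsub : Set.Iic x ⊆ {y : ℝ | M < |y|} := by
        intro y hy
        simp only [Set.mem_Iic] at hy
        simp only [Set.mem_setOf_eq]
        rw [abs_of_nonpos (by linarith)]
        linarith
      calc U n x ≤ ∫ y in {y : ℝ | M < |y|}, u n y :=
            setIntegral_mono_set (hint n).integrableOn
              (Eventually.of_forall fun y => h0 n y) (HasSubset.Subset.eventuallyLE hsub)
        _ ≤ ε/4 := (hMt n).le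
    have htail2 : ∀ n (a b : ℝ), M ≤ a → a ≤ b → U n b - U n a ≤ ε/4 := by
      intro n a b hMa hab
      rw [hincr n a b hab]
      have hsub : Set.Ioc a b ⊆ {y : ℝ | M < |y|} := by
        intro y hy
        simp only [Set.mem_Ioc] at hy
        simp only [Set.mem_setOf_eq]
        rw [abs_of_pos (by linarith)]
        linarith
      calc (∫ y in Set.Ioc a b, u n y) ≤ ∫ y in {y : ℝ | M < |y|}, u n y :=
            setIntegral_mono_set (hint n).integrableOn
              (Eventually.of_forall fun y => h0 n y) (HasSubset.Subset.eventuallyLE hsub)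
        _ ≤ ε/4 := (hMt n).le
    have hVtail1 : ∀ x : ℝ, x ≤ -M - 1 → V x ≤ ε/4 := fun x hx =>
      le_of_tendsto_of_tendsto (hpt x) tendsto_const_nhds
        (Eventually.of_forall fun n => htail1 n x hx)
    have hVtail2 : ∀ a b : ℝ, M ≤ a → a ≤ b → V b - V a ≤ ε/4 := fun a b hMa hab =>
      le_of_tendsto_of_tendsto ((hpt b).sub (hpt a)) tendsto_const_nhds
        (Eventually.of_forall fun n => htail2 n a b hMa hab)
    -- grid
    obtain ⟨k, hk⟩ := exists_nat_ge ((2*M+1)/(ε/4))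
    have hk0 : 0 < (k:ℝ) := lt_of_lt_of_le (by positivity) hk
    have hkne : (k:ℝ) ≠ 0 := ne_of_gt hk0
    set h₀ : ℝ := (2*M+1)/k with hh₀
    have hhpos : 0 < h₀ := by positivity
    have hhle : h₀ ≤ ε/4 := by
      rw [hh₀, div_le_iff₀ hk0]
      have := (div_le_iff₀ (by linarith : (0:ℝ) < ε/4)).mp hk
      linarith
    set t : ℕ → ℝ := fun i => -M - 1 + i * h₀ with ht
    have htmono : ∀ i j : ℕ, i ≤ j → t i ≤ t j := by
      intro i j hij
      simp only [ht]
      have : (i:ℝ) ≤ j := by exact_mod_cast hij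
      nlinarith
    have htk : t k = M := by
      simp only [ht, hh₀]
      field_simp
      ring
    have hev : ∀ᶠ n in atTop, ∀ i ∈ Finset.range (k+1), |U n (t i) - V (t i)| < ε/4 := by
      rw [eventually_all_finset]
      intro i _
      have := Metric.tendsto_nhds.mp (hpt (t i)) (ε/4) (by linarith)
      filter_upwards [this] with n hn
      rwa [Real.dist_eq] at hn
    filter_upwards [hev] with n hn x
    rw [Real.dist_eq]
    rcases le_or_gt x (-M-1) with hx | hx
    · have hA := htail1 n x hx
      have hB := hVtail1 x hx
      have hC := hUnonneg n x
      have hD := hVnonneg x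
      rw [abs_sub_lt_iff]
      constructor <;> linarith
    · rcases le_or_gt M x with hx2 | hx2
      · have hA := hn k (Finset.self_mem_range_succ k)
        rw [htk] at hA
        have hB := htail2 n M x le_rfl hx2
        have hB' := (hlip n M x hx2).1
        have hC := hVtail2 M x le_rfl hx2
        have hC' := (hVlip M x hx2).1
        rw [abs_sub_lt_iff] at hA ⊢
        constructor <;> [linarith [hA.1]; linarith [hA.2]]
      · -- middle
        set i : ℕ := ⌊(x + M + 1)/h₀⌋₊ with hi
        have hanneg : 0 ≤ (x + M + 1)/h₀ := div_nonneg (by linarith) hhpos.le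
        have hkh : (k:ℝ) * h₀ = 2*M+1 := by rw [hh₀]; field_simp
        have hik : i ≤ k := by
          have h1 : (x + M + 1)/h₀ ≤ (k:ℝ) := by
            rw [div_le_iff₀ hhpos]
            nlinarith
          calc i ≤ ⌊(k:ℝ)⌋₊ := Nat.floor_le_floor h1
            _ = k := Nat.floor_natCast k
        have hta : t i ≤ x := by
          have h2 : (i:ℝ) ≤ (x + M + 1)/h₀ := Nat.floor_le hanneg
          have h3 : (i:ℝ) * h₀ ≤ x + M + 1 := by
            rw [← le_div_iff₀ hhpos]; exact h2
          simp only [ht]; linarith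
        have htb : x - t i ≤ h₀ := by
          have h2 := Nat.lt_floor_add_one ((x + M + 1)/h₀)
          rw [← hi] at h2
          have h3 : x + M + 1 < ((i:ℝ)+1) * h₀ := (div_lt_iff₀ hhpos).mp h2
          simp only [ht]; linarith
        have hA := hn i (Finset.mem_range_succ_iff.mpr hik)
        have hB := (hlip n (t i) x hta)
        have hC := (hVlip (t i) x hta)
        rw [abs_sub_lt_iff] at hA ⊢
        constructor <;> [linarith [hA.1, hB.1, hB.2, hC.1, hC.2]; linarith [hA.2, hB.1, hB.2, hC.1, hC.2]]
  · intro h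
    have hpt : ∀ x : ℝ, Tendsto (fun n => ∫ y in Set.Iic x, u n y) atTop
        (nhds (∫ y in Set.Iic x, ulim y)) := fun x => h.tendsto_at x
    intro φ hφm hφb
    obtain ⟨C, hC⟩ := hφb
    have hC0 : 0 ≤ C := le_trans (abs_nonneg _) (hC 0)
    -- multiplication integrability helpers
    have hmulφ : ∀ f : ℝ → ℝ, Integrable f → Integrable (fun x => f x * φ x) := by
      intro f hf
      have := hf.bdd_mul hφm.aestronglyMeasurable
        (Eventually.of_forall fun x => by simpa [Real.norm_eq_abs] using hC x)
      simpa [mul_comm] using this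
    obtain ⟨Cg', hCg'⟩ : True := trivial
    rw [Metric.tendsto_nhds]
    intro ε hε
    set δ' : ℝ := ε / (6*(C+1)) with hδ'
    have hδ'pos : 0 < δ' := by positivity
    obtain ⟨M₁, hM₁pos, hM₁⟩ := htight δ' hδ'pos
    obtain ⟨M₂, hM₂pos, hM₂⟩ := tailSmall (fun x => |ulim x|) hlimint.abs
      (fun x => abs_nonneg _) hδ'pos
    set M : ℝ := max M₁ M₂ with hM
    have hMpos : 0 < M := lt_of_lt_of_le hM₁pos (le_max_left _ _)
    have hmeasT : MeasurableSet {x : ℝ | M < |x|} :=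
      measurableSet_lt measurable_const measurable_abs
    have hsub1 : {x : ℝ | M < |x|} ⊆ {x : ℝ | M₁ < |x|} := by
      intro x hx; simp only [Set.mem_setOf_eq] at *
      exact lt_of_le_of_lt (le_max_left _ _) hx
    have hsub2 : {x : ℝ | M < |x|} ⊆ {x : ℝ | M₂ < |x|} := by
      intro x hx; simp only [Set.mem_setOf_eq] at *
      exact lt_of_le_of_lt (le_max_right _ _) hx
    have hMtail_u : ∀ n, (∫ x in {x : ℝ | M < |x|}, u n x) < δ' := by
      intro n
      refine lt_of_le_of_lt ?_ (hM₁ n)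
      exact setIntegral_mono_set (hint n).integrableOn
        (Eventually.of_forall fun x => h0 n x) (HasSubset.Subset.eventuallyLE hsub1)
    have hMtail_l : (∫ x in {x : ℝ | M < |x|}, |ulim x|) < δ' := by
      refine lt_of_le_of_lt ?_ hM₂
      exact setIntegral_mono_set hlimint.abs.integrableOn
        (Eventually.of_forall fun x => abs_nonneg _) (HasSubset.Subset.eventuallyLE hsub2)
    set I : Set ℝ := Set.Icc (-M) M with hI
    have hIc : Iᶜ = {x : ℝ | M < |x|} := by
      ext x
      simp only [hI, Set.mem_compl_iff, Set.mem_Icc, Set.mem_setOf_eq, not_and_or, not_le]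
      constructor
      · rintro (hx | hx)
        · rw [abs_of_neg (by linarith)]; linarith
        · exact lt_of_lt_of_le hx (le_abs_self x)
      · intro hx
        rcases abs_cases x with ⟨h1, _⟩ | ⟨h1, _⟩
        · right; linarith
        · left; linarith
    set ψ : ℝ → ℝ := Set.indicator I φ with hψ
    -- the weight measure
    have hulim_meas : AEMeasurable (fun x => |ulim x|) volume := hlimint.abs.1.aemeasurable
    set w : ℝ → ℝ≥0∞ := fun x => 1 + ENNReal.ofReal |ulim x| with hw
    set μ : Measure ℝ := volume.withDensity w with hμ
    have hwtot : (∫⁻ x, ENNReal.ofReal |ulim x|) < ⊤ := by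
      have h2 := hlimint.2
      rw [hasFiniteIntegral_iff_norm] at h2
      simpa [Real.norm_eq_abs] using h2
    have hμfin : ∀ s : Set ℝ, MeasurableSet s → volume s < ⊤ → μ s < ⊤ := by
      intro s hs hvs
      rw [hμ, withDensity_apply _ hs]
      calc ∫⁻ x in s, w x = ∫⁻ x in s, (1 + ENNReal.ofReal |ulim x|) := by simp only [hw]
        _ = (∫⁻ _ in s, (1:ℝ≥0∞)) + ∫⁻ x in s, ENNReal.ofReal |ulim x| :=
            lintegral_add_left measurable_const _
        _ ≤ volume s + ∫⁻ x, ENNReal.ofReal |ulim x| := by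
            gcongr
            · simp
            · exact Measure.restrict_le_self
        _ < ⊤ := ENNReal.add_lt_top.mpr ⟨hvs, hwtot⟩
    haveI : IsLocallyFiniteMeasure μ := by
      constructor
      intro x
      exact ⟨Metric.ball x 1, Metric.ball_mem_nhds x one_pos,
        hμfin _ measurableSet_ball measure_ball_lt_top⟩
    have hvol_le_μ : (volume : Measure ℝ) ≤ μ := by
      have : (volume : Measure ℝ) = volume.withDensity 1 := withDensity_one.symm
      rw [this, hμ]
      exact withDensity_mono (Eventually.of_forall fun x => by simp [hw])
    -- integrability of ψ
    have hψintμ : Integrable ψ μ := by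
      rw [hψ, integrable_indicator_iff measurableSet_Icc]
      exact Measure.integrableOn_of_bounded
        (ne_of_lt (hμfin _ measurableSet_Icc measure_Icc_lt_top))
        hφm.stronglyMeasurable.aestronglyMeasurable
        (Eventually.of_forall fun x => by simpa [Real.norm_eq_abs] using hC x)
    have hψvol : Integrable ψ := by
      rw [hψ, integrable_indicator_iff measurableSet_Icc]
      exact Measure.integrableOn_of_bounded (ne_of_lt measure_Icc_lt_top)
        hφm.stronglyMeasurable.aestronglyMeasurable
        (Eventually.of_forall fun x => by simpa [Real.norm_eq_abs] using hC x)
    -- continuous approximation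
    obtain ⟨g, hgsupp, hgL1, hgc, hgintμ⟩ :=
      hψintμ.exists_hasCompactSupport_integral_sub_le hδ'pos
    have hgvol : Integrable g := hgc.integrable_of_hasCompactSupport hgsupp
    obtain ⟨Cg, hCg⟩ := hgc.bounded_above_of_compact_support hgsupp
    have hmulg : ∀ f : ℝ → ℝ, Integrable f → Integrable (fun x => f x * g x) := by
      intro f hf
      have := hf.bdd_mul hgc.aestronglyMeasurable (Eventually.of_forall hCg)
      simpa [mul_comm] using this
    -- comparison (A): L¹(vol) norm ≤ L¹(μ) norm
    have hsubμ : Integrable (fun x => ‖ψ x - g x‖) μ := (hψintμ.sub hgintμ).norm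
    have hA : (∫ x, |ψ x - g x|) ≤ ∫ x, ‖ψ x - g x‖ ∂μ := by
      have := integral_mono_measure hvol_le_μ
        (Eventually.of_forall fun x => norm_nonneg (ψ x - g x)) hsubμ
      simpa [Real.norm_eq_abs] using this
    -- comparison (B)
    have hB : (∫ x, |ψ x - g x| * |ulim x|) ≤ ∫ x, ‖ψ x - g x‖ ∂μ := by
      set ν : Measure ℝ := volume.withDensity (fun x => ((|ulim x|).toNNReal : ℝ≥0∞)) with hν
      have hνμ : ν ≤ μ := by
        rw [hν, hμ]
        refine withDensity_mono (Eventually.of_forall fun x => ?_)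
        rw [hw]
        simp only [ENNReal.ofReal]
        exact le_add_self
      have hsubν : Integrable (fun x => ‖ψ x - g x‖) ν :=
        (hsubμ.mono_measure hνμ)
      have h2 : (∫ x, ‖ψ x - g x‖ ∂ν) = ∫ x, (|ulim x|).toNNReal • ‖ψ x - g x‖ := by
        rw [hν]
        exact integral_withDensity_eq_integral_smul₀
          hulim_meas.real_toNNReal _
      have h3 : (∫ x, (|ulim x|).toNNReal • ‖ψ x - g x‖) = ∫ x, |ψ x - g x| * |ulim x| := by
        congr 1
        funext x
        rw [NNReal.smul_def, smul_eq_mul, Real.coe_toNNReal _ (abs_nonneg _), Real.norm_eq_abs]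
        ring
      calc (∫ x, |ψ x - g x| * |ulim x|) = ∫ x, ‖ψ x - g x‖ ∂ν := by rw [h2, h3]
        _ ≤ ∫ x, ‖ψ x - g x‖ ∂μ := integral_mono_measure hνμ
            (Eventually.of_forall fun x => norm_nonneg _) hsubμ
    -- ψ measurable & multiplication integrability
    have hψm : Measurable ψ := hφm.indicator measurableSet_Icc
    have hψbd : ∀ x, |ψ x| ≤ C := by
      intro x
      rw [hψ]
      by_cases hx : x ∈ I
      · rw [Set.indicator_of_mem hx]; exact hC x
      · rw [Set.indicator_of_notMem hx]; simpa using hC0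
    have hmulψ : ∀ f : ℝ → ℝ, Integrable f → Integrable (fun x => f x * ψ x) := by
      intro f hf
      have := hf.bdd_mul hψm.aestronglyMeasurable
        (Eventually.of_forall fun x => by simpa [Real.norm_eq_abs] using hψbd x)
      simpa [mul_comm] using this
    have hIcm : MeasurableSet (Iᶜ : Set ℝ) := measurableSet_Icc.compl
    -- decomposition
    have hdecomp : ∀ f : ℝ → ℝ, Integrable f →
        (∫ x, f x * φ x) - (∫ x, f x * ψ x) = ∫ x in Iᶜ, f x * φ x := by
      intro f hf
      have h1 : (fun x => f x * ψ x) = I.indicator (fun x => f x * φ x) := by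
        funext x
        by_cases hx : x ∈ I <;> simp [hψ, Set.indicator_apply, hx]
      have h2 := integral_add_compl (measurableSet_Icc : MeasurableSet I) (hmulφ f hf)
      rw [h1, integral_indicator measurableSet_Icc]
      linarith
    -- tail bound
    have htailbd : ∀ f : ℝ → ℝ, Integrable f →
        |∫ x in Iᶜ, f x * φ x| ≤ C * ∫ x in Iᶜ, |f x| := by
      intro f hf
      calc |∫ x in Iᶜ, f x * φ x| ≤ ∫ x in Iᶜ, |f x| * |φ x| := by
            simpa [Real.norm_eq_abs] using
              norm_integral_le_integral_norm (μ := volume.restrict Iᶜ) (fun x => f x * φ x)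
        _ ≤ ∫ x in Iᶜ, C * |f x| := by
            have hi1 : Integrable (fun x => |f x| * |φ x|) (volume.restrict Iᶜ) := by
              have := (hmulφ f hf).abs.integrableOn (s := Iᶜ)
              simpa [abs_mul] using this.integrable
            apply integral_mono hi1 ((hf.abs.const_mul C).integrableOn)
            intro x
            show |f x| * |φ x| ≤ C * |f x|
            calc |f x| * |φ x| ≤ |f x| * C := mul_le_mul_of_nonneg_left (hC x) (abs_nonneg _)
              _ = C * |f x| := mul_comm _ _
        _ = C * ∫ x in Iᶜ, |f x| := integral_const_mul C _
    have htail_u : ∀ n, |(∫ x, u n x * φ x) - ∫ x, u n x * ψ x| ≤ C * δ' := by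
      intro n
      rw [hdecomp (u n) (hint n)]
      refine le_trans (htailbd (u n) (hint n)) ?_
      apply mul_le_mul_of_nonneg_left _ hC0
      have heq : (∫ x in Iᶜ, |u n x|) = ∫ x in Iᶜ, u n x :=
        setIntegral_congr_fun hIcm (fun x _ => abs_of_nonneg (h0 n x))
      rw [heq, hIc]
      exact (hMtail_u n).le
    have htail_l : |(∫ x, ulim x * φ x) - ∫ x, ulim x * ψ x| ≤ C * δ' := by
      rw [hdecomp ulim hlimint]
      refine le_trans (htailbd ulim hlimint) ?_
      apply mul_le_mul_of_nonneg_left _ hC0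
      rw [hIc]
      exact hMtail_l.le
    -- approximation bounds
    have happrox_u : ∀ n, |(∫ x, u n x * ψ x) - ∫ x, u n x * g x| ≤ δ' := by
      intro n
      rw [← integral_sub (hmulψ (u n) (hint n)) (hmulg (u n) (hint n))]
      calc |∫ x, (u n x * ψ x - u n x * g x)| ≤ ∫ x, |u n x * ψ x - u n x * g x| := by
            simpa [Real.norm_eq_abs] using
              norm_integral_le_integral_norm (fun x => u n x * ψ x - u n x * g x)
        _ ≤ ∫ x, |ψ x - g x| := by
            apply integral_mono ((hmulψ (u n) (hint n)).sub (hmulg (u n) (hint n))).abs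
              (hψvol.sub hgvol).abs
            intro x
            show |u n x * ψ x - u n x * g x| ≤ |ψ x - g x|
            rw [← mul_sub, abs_mul, abs_of_nonneg (h0 n x)]
            calc u n x * |ψ x - g x| ≤ 1 * |ψ x - g x| :=
                  mul_le_mul_of_nonneg_right (h1 n x) (abs_nonneg _)
              _ = |ψ x - g x| := one_mul _
        _ ≤ ∫ x, ‖ψ x - g x‖ ∂μ := hA
        _ ≤ δ' := hgL1
    have happrox_l : |(∫ x, ulim x * ψ x) - ∫ x, ulim x * g x| ≤ δ' := by
      rw [← integral_sub (hmulψ ulim hlimint) (hmulg ulim hlimint)]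
      have hbd : ∃ Cb : ℝ, ∀ x, ‖|ψ x - g x|‖ ≤ Cb := by
        refine ⟨C + Cg, fun x => ?_⟩
        rw [Real.norm_eq_abs, abs_abs]
        calc |ψ x - g x| ≤ |ψ x| + |g x| := abs_sub _ _
          _ ≤ C + Cg := add_le_add (hψbd x) (by simpa [Real.norm_eq_abs] using hCg x)
      have hprodint : Integrable (fun x => |ψ x - g x| * |ulim x|) :=
        hlimint.abs.bdd_mul ((hψvol.sub hgvol).abs.1) (c := hbd.choose) (Eventually.of_forall hbd.choose_spec)
      calc |∫ x, (ulim x * ψ x - ulim x * g x)| ≤ ∫ x, |ulim x * ψ x - ulim x * g x| := by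
            simpa [Real.norm_eq_abs] using
              norm_integral_le_integral_norm (fun x => ulim x * ψ x - ulim x * g x)
        _ ≤ ∫ x, |ψ x - g x| * |ulim x| := by
            apply integral_mono ((hmulψ ulim hlimint).sub (hmulg ulim hlimint)).abs hprodint
            intro x
            show |ulim x * ψ x - ulim x * g x| ≤ |ψ x - g x| * |ulim x|
            rw [← mul_sub, abs_mul]
            exact le_of_eq (mul_comm _ _)
        _ ≤ ∫ x, ‖ψ x - g x‖ ∂μ := hB
        _ ≤ δ' := hgL1
    -- convergence for g
    have hev := Metric.tendsto_nhds.mp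
      (keyCont u ulim hint hlimint h0 h1 hpt g hgc hgsupp) (ε/6) (by linarith)
    filter_upwards [hev] with n hn
    rw [Real.dist_eq] at hn ⊢
    have hkey : C * δ' + δ' = ε / 6 := by
      rw [hδ']
      field_simp
    have b1 := abs_le.mp (htail_u n)
    have b2 := abs_le.mp (happrox_u n)
    have b3 := abs_sub_lt_iff.mp hn
    have b4 := abs_le.mp happrox_l
    have b5 := abs_le.mp htail_l
    rw [abs_sub_lt_iff]
    constructor <;> linarith [b1.1, b1.2, b2.1, b2.2, b3.1, b3.2, b4.1, b4.2, b5.1, b5.2]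
end

section
/- Let U_n : [a,b] × ℝ → ℝ be continuous functions converging uniformly on [a,b] × ℝ to U, where each U_n(t,·) is nondecreasing, 1-Lipschitz, with U_n(t,−∞)=0 and sup U_n(t,·) ≤ C. Then U is continuous, and for each t the function u(t,·) := ∂_x U(t,·) exists a.e.; moreover the map t ↦ u(t,·) is continuous from [a,b] into L¹(ℝ) endowed with its weak topology, provided the family is tight uniformly in t. -/
open MeasureTheory Filter Set

open Classical in
noncomputable def mkSt (f : ℝ → ℝ) : StieltjesFunction ℝ :=
  if h : Monotone f ∧ Continuous f then
    { toFun := f, mono' := h.1, right_continuous' := fun x => h.2.continuousWithinAt }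
  else StieltjesFunction.id

lemma mkSt_apply {f : ℝ → ℝ} (h1 : Monotone f) (h2 : Continuous f) : ⇑(mkSt f) = f := by
  simp only [mkSt, dif_pos (⟨h1, h2⟩ : Monotone f ∧ Continuous f)]

lemma stieltjes_le_volume (f : StieltjesFunction ℝ) (hlip : LipschitzWith 1 ⇑f) :
    f.measure ≤ volume := by
  have hmono : Monotone fun x => x - f x := by
    intro x y hxy
    have h0 : |f x - f y| ≤ |x - y| := by
      have := hlip.dist_le_mul x y
      rwa [Real.dist_eq, Real.dist_eq, NNReal.coe_one, one_mul] at this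
    have h2 := (abs_le.1 h0).1
    rw [abs_sub_comm, abs_of_nonneg (sub_nonneg.2 hxy)] at h2
    simp only
    linarith
  have hcont : Continuous fun x => x - f x := continuous_id.sub hlip.continuous
  set g : StieltjesFunction ℝ :=
    { toFun := fun x => x - f x, mono' := hmono,
      right_continuous' := fun x => hcont.continuousWithinAt } with hg
  have hvol : (volume : Measure ℝ) = f.measure + g.measure := by
    refine Measure.ext_of_Ioc _ _ (fun c d hcd => ?_)
    have h1 : f c ≤ f d := f.mono hcd.le
    have h2 : c - f c ≤ d - f d := hmono hcd.le
    simp only [Real.volume_Ioc, Measure.add_apply, StieltjesFunction.measure_Ioc]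
    rw [← ENNReal.ofReal_add (by linarith) (by linarith)]
    congr 1
    show d - c = (f d - f c) + ((fun x => x - f x) d - (fun x => x - f x) c)
    ring
  rw [hvol]
  exact Measure.le_add_right le_rfl

lemma cont_of_approx {F : ℝ → ℝ} {s : Set ℝ}
    (h : ∀ ε > 0, ∃ G : ℝ → ℝ, ContinuousOn G s ∧ ∀ t ∈ s, |F t - G t| ≤ ε) :
    ContinuousOn F s := by
  intro t ht
  rw [Metric.continuousWithinAt_iff]
  intro ε hε
  obtain ⟨G, hGc, hGa⟩ := h (ε/4) (by linarith)
  obtain ⟨δ, hδ, hδ'⟩ := Metric.continuousWithinAt_iff.1 (hGc t ht) (ε/4) (by linarith)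
  refine ⟨δ, hδ, fun {y} hy hyd => ?_⟩
  have h1 := hGa y hy
  have h2 := hGa t ht
  have h3 := hδ' hy hyd
  rw [Real.dist_eq] at h3 ⊢
  have heq : F y - F t = (F y - G y) + (G y - G t) + (G t - F t) := by ring
  calc |F y - F t| ≤ |F y - G y| + |G y - G t| + |G t - F t| := by
        rw [heq]; exact (abs_add_le _ _).trans (by gcongr; exact abs_add_le _ _)
    _ < ε := by rw [abs_sub_comm (G t)] at *; linarith

lemma aux_weak (a b C : ℝ) (hC : 0 ≤ C) (U : ℝ → ℝ → ℝ)
    (hUcont : ContinuousOn (fun p : ℝ × ℝ => U p.1 p.2) (Set.Icc a b ×ˢ (Set.univ : Set ℝ)))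
    (hUmono : ∀ t ∈ Set.Icc a b, Monotone (U t))
    (hUlip : ∀ t ∈ Set.Icc a b, LipschitzWith 1 (U t))
    (hUbot : ∀ t ∈ Set.Icc a b, Tendsto (U t) atBot (nhds 0))
    (hUC : ∀ t ∈ Set.Icc a b, ∀ x, U t x ≤ C)
    (htight : ∀ δ > (0:ℝ), ∃ M > (0:ℝ), ∀ t ∈ Set.Icc a b, U t (-M) + (C - U t M) < δ) :
    ∃ u : ℝ → ℝ → ℝ,
      (∀ t ∈ Set.Icc a b, Integrable (u t)) ∧
      (∀ t ∈ Set.Icc a b, ∀ᵐ x : ℝ, HasDerivAt (U t) (u t x) x) ∧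
      (∀ φ : ℝ → ℝ, Measurable φ → (∃ C' : ℝ, ∀ x, |φ x| ≤ C') →
        ContinuousOn (fun t => ∫ x, u t x * φ x) (Set.Icc a b)) := by
  classical
  set u : ℝ → ℝ → ℝ :=
    fun t x => min (((mkSt (U t)).measure.rnDeriv volume x).toReal) 1 with hu
  have hfe : ∀ t ∈ Set.Icc a b, ⇑(mkSt (U t)) = U t :=
    fun t ht => mkSt_apply (hUmono t ht) (hUlip t ht).continuous
  -- nonnegativity of U
  have hU0 : ∀ t ∈ Set.Icc a b, ∀ x, 0 ≤ U t x := by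
    intro t ht x
    refine le_of_tendsto (hUbot t ht) ?_
    filter_upwards [eventually_le_atBot x] with y hy using hUmono t ht hy
  -- limit at +infinity
  have hbdd : ∀ t ∈ Set.Icc a b, C ∈ upperBounds (Set.range (U t)) := by
    rintro t ht _ ⟨x, rfl⟩
    exact hUC t ht x
  have hUtop : ∀ t ∈ Set.Icc a b, Tendsto (U t) atTop (nhds (⨆ x, U t x)) :=
    fun t ht => tendsto_atTop_ciSup (hUmono t ht) ⟨C, hbdd t ht⟩
  have hLC : ∀ t ∈ Set.Icc a b, (⨆ x, U t x) ≤ C :=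
    fun t ht => ciSup_le (hUC t ht)
  have hL0 : ∀ t ∈ Set.Icc a b, ∀ x, U t x ≤ ⨆ x, U t x :=
    fun t ht x => le_ciSup ⟨C, hbdd t ht⟩ x
  have hfin : ∀ t ∈ Set.Icc a b, IsFiniteMeasure (mkSt (U t)).measure := by
    intro t ht
    exact (mkSt (U t)).isFiniteMeasure (l := 0) (u := ⨆ x, U t x)
      (by rw [hfe t ht]; exact hUbot t ht) (by rw [hfe t ht]; exact hUtop t ht)
  have hle : ∀ t ∈ Set.Icc a b, (mkSt (U t)).measure ≤ volume :=
    fun t ht => stieltjes_le_volume _ (by rw [hfe t ht]; exact hUlip t ht)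
  have hac : ∀ t ∈ Set.Icc a b, (mkSt (U t)).measure ≪ volume :=
    fun t ht => Measure.absolutelyContinuous_of_le (hle t ht)
  have humeas : ∀ t, Measurable (u t) :=
    fun t => ((Measure.measurable_rnDeriv _ _).ennreal_toReal).min measurable_const
  have hu0 : ∀ t x, 0 ≤ u t x := fun t x => le_min ENNReal.toReal_nonneg zero_le_one
  have hu1 : ∀ t x, u t x ≤ 1 := fun t x => min_le_right _ _
  have huae : ∀ t ∈ Set.Icc a b,
      (u t) =ᵐ[volume] fun x => (((mkSt (U t)).measure.rnDeriv volume x).toReal) := by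
    intro t ht
    filter_upwards [Measure.rnDeriv_le_one_of_le (hle t ht)] with x hx
    exact min_eq_left (by simpa using ENNReal.toReal_mono ENNReal.one_ne_top hx)
  have hset : ∀ t ∈ Set.Icc a b, ∀ s : Set ℝ,
      ∫ x in s, u t x = ((mkSt (U t)).measure s).toReal := by
    intro t ht s
    haveI := hfin t ht
    rw [integral_congr_ae (ae_restrict_of_ae (huae t ht))]
    exact Measure.setIntegral_toReal_rnDeriv (hac t ht) s
  have hIoc : ∀ t ∈ Set.Icc a b, ∀ p q : ℝ, p ≤ q →
      ∫ x in Set.Ioc p q, u t x = U t q - U t p := by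
    intro t ht p q hpq
    rw [hset t ht, StieltjesFunction.measure_Ioc, hfe t ht,
      ENNReal.toReal_ofReal (sub_nonneg.2 (hUmono t ht hpq))]
  have hintu : ∀ t ∈ Set.Icc a b, Integrable (u t) := by
    intro t ht
    haveI := hfin t ht
    refine (Measure.integrable_toReal_rnDeriv (μ := (mkSt (U t)).measure)
      (ν := volume)).mono (humeas t).aestronglyMeasurable ?_
    filter_upwards with x
    rw [Real.norm_eq_abs, Real.norm_eq_abs, abs_of_nonneg (hu0 t x),
      abs_of_nonneg ENNReal.toReal_nonneg]
    exact min_le_left _ _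
  refine ⟨u, hintu, ?_, ?_⟩
  · intro t ht
    filter_upwards [(mkSt (U t)).ae_hasDerivAt, huae t ht] with x h1 h2
    rw [hfe t ht] at h1
    rw [h2]
    exact h1
  · rintro φ hφm ⟨C', hφb⟩
    have hC'0 : 0 ≤ C' := (abs_nonneg _).trans (hφb 0)
    apply cont_of_approx
    intro ε hε
    -- tightness
    obtain ⟨M, hM0, hMt⟩ := htight (ε/3/(C'+1)) (by positivity)
    set s : Set ℝ := Set.Ioc (-M) M with hs
    set ψ : ℝ → ℝ := s.indicator φ with hψ
    have hψm : Measurable ψ := hφm.indicator measurableSet_Ioc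
    have hψint : Integrable ψ := by
      rw [hψ, integrable_indicator_iff measurableSet_Ioc]
      refine Integrable.mono' (g := fun _ => C') ?_ hφm.aestronglyMeasurable ?_
      · refine integrableOn_const ?_
        rw [Real.volume_Ioc]
        exact ENNReal.ofReal_ne_top
      · filter_upwards with x
        rw [Real.norm_eq_abs]
        exact hφb x
    obtain ⟨g, hgsupp, hgL1, hgcont, hgint⟩ :=
      hψint.exists_hasCompactSupport_integral_sub_le (show (0:ℝ) < ε/3 by linarith)
    obtain ⟨r, hr⟩ := hgsupp.isBounded.subset_closedBall 0
    set K : ℝ := max r 0 + 1 with hK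
    have hK0 : 0 < K := by positivity
    have hgz : ∀ x, x ∉ Set.Ioc (-K) K → g x = 0 := by
      intro x hx
      by_contra h
      have hxs : x ∈ tsupport g := subset_tsupport g h
      have h2 := hr hxs
      rw [Metric.mem_closedBall, Real.dist_eq, sub_zero] at h2
      have h3 : |x| ≤ max r 0 := h2.trans (le_max_left _ _)
      simp only [Set.mem_Ioc, not_and_or, not_lt, not_le] at hx
      rcases hx with hx | hx
      · have := neg_abs_le x; rw [hK] at hx; linarith
      · have := le_abs_self x; rw [hK] at hx; linarith
    have hgu := Metric.uniformContinuous_iff.1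
      (hgsupp.uniformContinuous_of_continuous hgcont)
    have hC1 : (0:ℝ) < C + 1 := by linarith
    set η : ℝ := ε/3/(C+1) with hη
    have hη0 : 0 < η := by positivity
    obtain ⟨δ, hδ0, hδ⟩ := hgu η hη0
    set N : ℕ := Nat.ceil (2*K/δ) + 1 with hN
    have hNpos : 0 < (N:ℝ) := by
      rw [hN]; push_cast; positivity
    have hNne : (N:ℝ) ≠ 0 := ne_of_gt hNpos
    have hmesh : 2*K/(N:ℝ) < δ := by
      have h1 : 2*K/δ < (N:ℝ) := by
        rw [hN]; push_cast
        linarith [Nat.le_ceil (2*K/δ)]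
      rw [div_lt_iff₀ hNpos]
      have h2 := (div_lt_iff₀ hδ0).1 h1
      linarith
    have hmesh0 : 0 ≤ 2*K/(N:ℝ) := by positivity
    set p : ℕ → ℝ := fun i => -K + (2*K/(N:ℝ)) * i with hp
    have hp0 : p 0 = -K := by simp [hp]
    have hpN : p N = K := by
      rw [hp]
      field_simp
      ring
    have hpstep : ∀ i : ℕ, p (i+1) - p i = 2*K/(N:ℝ) := by
      intro i; rw [hp]; push_cast; ring
    have hple : ∀ i : ℕ, p i ≤ p (i+1) := by
      intro i
      refine sub_nonneg.1 ?_
      rw [hpstep i]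
      exact hmesh0
    clear hp
    clear_value p
    set G : ℝ → ℝ :=
      fun t => ∑ i ∈ Finset.range N, g (p (i+1)) * (U t (p (i+1)) - U t (p i)) with hG
    refine ⟨G, ?_, ?_⟩
    · -- continuity of G
      have hslice : ∀ y : ℝ, ContinuousOn (fun t => U t y) (Set.Icc a b) := by
        intro y
        have hcomp : (fun t => U t y)
            = (fun pq : ℝ × ℝ => U pq.1 pq.2) ∘ (fun t => (t, y)) := rfl
        rw [hcomp]
        exact hUcont.comp ((continuous_id.prodMk continuous_const).continuousOn)
          (fun t ht => ⟨ht, trivial⟩)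
      exact continuousOn_finset_sum _ fun i _ =>
        continuousOn_const.mul ((hslice _).sub (hslice _))
    · intro t ht
      haveI := hfin t ht
      -- integrabilities
      have hi1 : Integrable (fun x => u t x * φ x) :=
        ((hintu t ht).bdd_mul (c := C') hφm.aestronglyMeasurable
          (Eventually.of_forall fun x => by rw [Real.norm_eq_abs]; exact hφb x)).congr
          (Eventually.of_forall fun x => mul_comm _ _)
      have hψb : ∀ x, |ψ x| ≤ C' := by
        intro x
        by_cases hx : x ∈ s
        · rw [hψ, Set.indicator_of_mem hx]; exact hφb x
        · rw [hψ, Set.indicator_of_notMem hx, abs_zero]; exact hC'0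
      have hi2 : Integrable (fun x => u t x * ψ x) :=
        ((hintu t ht).bdd_mul (c := C') hψm.aestronglyMeasurable
          (Eventually.of_forall fun x => by rw [Real.norm_eq_abs]; exact hψb x)).congr
          (Eventually.of_forall fun x => mul_comm _ _)
      have hi3 : Integrable (fun x => u t x * g x) :=
        hgint.bdd_mul (c := 1) (humeas t).aestronglyMeasurable
          (Eventually.of_forall fun x => by
            rw [Real.norm_eq_abs, abs_of_nonneg (hu0 t x)]; exact hu1 t x)
      -- Step A : tails
      have hIψ : ∫ x, u t x * ψ x = ∫ x in s, u t x * φ x := by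
        rw [← integral_indicator measurableSet_Ioc]
        congr 1
        funext x
        by_cases hx : x ∈ s
        · simp [hψ, hx, Set.indicator_of_mem (show x ∈ Set.Ioc (-M) M from hx)]
        · simp [hψ, Set.indicator_of_notMem hx, Set.indicator_of_notMem (show x ∉ Set.Ioc (-M) M from hx)]
      have hsplit : (∫ x, u t x * φ x) - (∫ x, u t x * ψ x) = ∫ x in sᶜ, u t x * φ x := by
        rw [hIψ]
        have := integral_add_compl (measurableSet_Ioc : MeasurableSet s) hi1
        linarith
      have htail : ((mkSt (U t)).measure sᶜ).toReal ≤ ε/3/(C'+1) := by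
        have hμs : (mkSt (U t)).measure s = ENNReal.ofReal (U t M - U t (-M)) := by
          rw [hs, StieltjesFunction.measure_Ioc, hfe t ht]
        have hμuniv : (mkSt (U t)).measure Set.univ = ENNReal.ofReal (⨆ x, U t x) := by
          rw [(mkSt (U t)).measure_univ (l := 0) (u := ⨆ x, U t x)
            (by rw [hfe t ht]; exact hUbot t ht) (by rw [hfe t ht]; exact hUtop t ht),
            sub_zero]
        have hcompl : (mkSt (U t)).measure sᶜ
            = (mkSt (U t)).measure Set.univ - (mkSt (U t)).measure s :=
          measure_compl measurableSet_Ioc (measure_ne_top _ _)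
        have hM' : (-M : ℝ) ≤ M := by linarith
        have h1 : U t (-M) ≤ U t M := hUmono t ht hM'
        have h2 : U t M ≤ ⨆ x, U t x := hL0 t ht M
        have h0 : 0 ≤ U t (-M) := hU0 t ht (-M)
        rw [hcompl, hμuniv, hμs, ← ENNReal.ofReal_sub _ (sub_nonneg.2 h1),
          ENNReal.toReal_ofReal (by linarith)]
        have h3 := hMt t ht
        have h4 := hLC t ht
        linarith
      have hA : |(∫ x, u t x * φ x) - (∫ x, u t x * ψ x)| ≤ ε/3 := by
        rw [hsplit]
        have h1 : |∫ x in sᶜ, u t x * φ x| ≤ ∫ x in sᶜ, C' * u t x := by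
          rw [← Real.norm_eq_abs]
          refine (norm_integral_le_integral_norm _).trans ?_
          refine setIntegral_mono_on hi1.norm.integrableOn
            ((hintu t ht).const_mul C').integrableOn
            (measurableSet_Ioc.compl) (fun x _ => ?_)
          rw [Real.norm_eq_abs, abs_mul, abs_of_nonneg (hu0 t x), mul_comm]
          exact mul_le_mul_of_nonneg_right (hφb x) (hu0 t x)
        have h2 : ∫ x in sᶜ, C' * u t x = C' * ((mkSt (U t)).measure sᶜ).toReal := by
          rw [MeasureTheory.integral_const_mul, hset t ht]
        have h3 : C' * ((mkSt (U t)).measure sᶜ).toReal ≤ C' * (ε/3/(C'+1)) :=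
          mul_le_mul_of_nonneg_left htail hC'0
        have h4 : C' * (ε/3/(C'+1)) ≤ ε/3 := by
          have h6 : C' * (ε/3/(C'+1)) = (ε/3) * (C'/(C'+1)) := by ring
          have h5 : C' / (C'+1) ≤ 1 := by
            rw [div_le_one (by linarith)]; linarith
          rw [h6]
          calc ε/3 * (C'/(C'+1)) ≤ ε/3 * 1 :=
                mul_le_mul_of_nonneg_left h5 (by linarith)
            _ = ε/3 := mul_one _
        calc |∫ x in sᶜ, u t x * φ x| ≤ ∫ x in sᶜ, C' * u t x := h1
          _ = C' * ((mkSt (U t)).measure sᶜ).toReal := h2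
          _ ≤ C' * (ε/3/(C'+1)) := h3
          _ ≤ ε/3 := h4
      -- Step B : L¹ approximation
      have hB : |(∫ x, u t x * ψ x) - (∫ x, u t x * g x)| ≤ ε/3 := by
        rw [← integral_sub hi2 hi3]
        have heq : ∀ x, u t x * ψ x - u t x * g x = u t x * (ψ x - g x) := fun x => by ring
        simp_rw [heq]
        rw [← Real.norm_eq_abs]
        refine (norm_integral_le_integral_norm _).trans (le_trans ?_ hgL1)
        have hi4 : Integrable (fun x => u t x * (ψ x - g x)) := by
          refine (hi2.sub hi3).congr (Eventually.of_forall fun x => ?_)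
          simp only [Pi.sub_apply]
          ring
        refine integral_mono hi4.norm (hψint.sub hgint).norm (fun x => ?_)
        · rw [Real.norm_eq_abs, Real.norm_eq_abs, abs_mul]
          calc |u t x| * |ψ x - g x| ≤ 1 * |ψ x - g x| := by
                refine mul_le_mul_of_nonneg_right ?_ (abs_nonneg _)
                rw [abs_of_nonneg (hu0 t x)]; exact hu1 t x
            _ = |ψ x - g x| := one_mul _
      -- Step C : Riemann sums
      have hCc : |(∫ x, u t x * g x) - G t| ≤ ε/3 := by
        have hiog : ∫ x, u t x * g x = ∫ x in Set.Ioc (-K) K, u t x * g x :=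
          (setIntegral_eq_integral_of_forall_compl_eq_zero
            (fun x hx => by rw [hgz x hx, mul_zero])).symm
        have hadj : ∀ k < N, IntervalIntegrable (fun x => u t x * g x) volume (p k) (p (k+1)) :=
          fun k _ => hi3.intervalIntegrable
        have hsum := intervalIntegral.sum_integral_adjacent_intervals hadj
        have h0N : p 0 ≤ p N := by rw [hp0, hpN]; linarith
        have hIK : ∫ x in Set.Ioc (-K) K, u t x * g x
            = ∑ i ∈ Finset.range N, ∫ x in Set.Ioc (p i) (p (i+1)), u t x * g x := by
          calc ∫ x in Set.Ioc (-K) K, u t x * g x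
              = ∫ x in (p 0)..(p N), u t x * g x := by
                rw [intervalIntegral.integral_of_le h0N, hp0, hpN]
            _ = ∑ i ∈ Finset.range N, ∫ x in (p i)..(p (i+1)), u t x * g x := hsum.symm
            _ = ∑ i ∈ Finset.range N, ∫ x in Set.Ioc (p i) (p (i+1)), u t x * g x :=
                Finset.sum_congr rfl (fun i _ =>
                  intervalIntegral.integral_of_le (hple i))
        have hper : ∀ i ∈ Finset.range N,
            |(∫ x in Set.Ioc (p i) (p (i+1)), u t x * g x)
              - g (p (i+1)) * (U t (p (i+1)) - U t (p i))|
              ≤ η * (U t (p (i+1)) - U t (p i)) := by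
          intro i _
          have hq : p i ≤ p (i+1) := hple i
          have hconst : ∫ x in Set.Ioc (p i) (p (i+1)), u t x * g (p (i+1))
              = g (p (i+1)) * (U t (p (i+1)) - U t (p i)) := by
            rw [integral_mul_const, hIoc t ht _ _ hq, mul_comm]
          rw [← hconst, ← integral_sub hi3.integrableOn
            (((hintu t ht).mul_const _).integrableOn)]
          have heq : ∀ x, u t x * g x - u t x * g (p (i+1)) = u t x * (g x - g (p (i+1))) :=
            fun x => by ring
          rw [← Real.norm_eq_abs]
          refine (norm_integral_le_integral_norm _).trans ?_
          have hmono2 : ∫ x in Set.Ioc (p i) (p (i+1)), ‖u t x * g x - u t x * g (p (i+1))‖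
              ≤ ∫ x in Set.Ioc (p i) (p (i+1)), η * u t x := by
            refine setIntegral_mono_on
              (hi3.integrableOn.sub (((hintu t ht).mul_const _).integrableOn)).norm
              (((hintu t ht).const_mul η).integrableOn)
              measurableSet_Ioc (fun x hx => ?_)
            rw [heq, Real.norm_eq_abs, abs_mul, abs_of_nonneg (hu0 t x)]
            have hdist : |g x - g (p (i+1))| ≤ η := by
              have hxq : dist x (p (i+1)) < δ := by
                rw [Real.dist_eq, abs_sub_comm, abs_of_nonneg (sub_nonneg.2 hx.2)]
                have := hpstep i
                have hx1 := hx.1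
                linarith [hmesh]
              exact le_of_lt (by simpa [Real.dist_eq] using hδ hxq)
            calc u t x * |g x - g (p (i+1))| ≤ u t x * η :=
                  mul_le_mul_of_nonneg_left hdist (hu0 t x)
              _ = η * u t x := mul_comm _ _
          refine hmono2.trans ?_
          rw [MeasureTheory.integral_const_mul, hIoc t ht _ _ hq]
        rw [hiog, hIK, hG]
        rw [← Finset.sum_sub_distrib]
        refine (Finset.abs_sum_le_sum_abs _ _).trans ?_
        refine le_trans (Finset.sum_le_sum hper) ?_
        rw [← Finset.mul_sum, Finset.sum_range_sub (fun i => U t (p i)), hp0, hpN]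
        have h1 : U t K - U t (-K) ≤ C := by
          linarith [hUC t ht K, hU0 t ht (-K)]
        calc η * (U t K - U t (-K)) ≤ η * C :=
              mul_le_mul_of_nonneg_left h1 (le_of_lt hη0)
          _ ≤ η * (C + 1) := mul_le_mul_of_nonneg_left (by linarith) (le_of_lt hη0)
          _ = ε/3 := by rw [hη]; field_simp
      -- combine
      have hdecomp : (∫ x, u t x * φ x) - G t
          = ((∫ x, u t x * φ x) - (∫ x, u t x * ψ x))
            + ((∫ x, u t x * ψ x) - (∫ x, u t x * g x))
            + ((∫ x, u t x * g x) - G t) := by ring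
      calc |(∫ x, u t x * φ x) - G t|
          ≤ |(∫ x, u t x * φ x) - (∫ x, u t x * ψ x)|
            + |(∫ x, u t x * ψ x) - (∫ x, u t x * g x)|
            + |(∫ x, u t x * g x) - G t| := by
            rw [hdecomp]
            exact (abs_add_le _ _).trans (by gcongr; exact abs_add_le _ _)
        _ ≤ ε := by linarith

theorem stmt_11 (a b C : ℝ) (hab : a < b) (hC : 0 ≤ C)
    (Un : ℕ → ℝ → ℝ → ℝ) (U : ℝ → ℝ → ℝ)
    (hcont : ∀ n, ContinuousOn (fun p : ℝ × ℝ => Un n p.1 p.2)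
      (Set.Icc a b ×ˢ (Set.univ : Set ℝ)))
    (hunif : TendstoUniformlyOn (fun (n : ℕ) (p : ℝ × ℝ) => Un n p.1 p.2)
      (fun p : ℝ × ℝ => U p.1 p.2) atTop (Set.Icc a b ×ˢ (Set.univ : Set ℝ)))
    (hmono : ∀ n, ∀ t ∈ Set.Icc a b, Monotone (Un n t))
    (hlip : ∀ n, ∀ t ∈ Set.Icc a b, LipschitzWith 1 (Un n t))
    (hzero : ∀ n, ∀ t ∈ Set.Icc a b, Tendsto (Un n t) atBot (nhds 0))
    (hbound : ∀ n, ∀ t ∈ Set.Icc a b, ∀ x, Un n t x ≤ C)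
    (htight : ∀ δ > (0 : ℝ), ∃ M > (0 : ℝ), ∀ t ∈ Set.Icc a b,
      U t (-M) + (C - U t M) < δ) :
    ContinuousOn (fun p : ℝ × ℝ => U p.1 p.2) (Set.Icc a b ×ˢ (Set.univ : Set ℝ)) ∧
    ∃ u : ℝ → ℝ → ℝ,
      (∀ t ∈ Set.Icc a b, Integrable (u t)) ∧
      (∀ t ∈ Set.Icc a b, ∀ᵐ x : ℝ, HasDerivAt (U t) (u t x) x) ∧
      (∀ φ : ℝ → ℝ, Measurable φ → (∃ C' : ℝ, ∀ x, |φ x| ≤ C') →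
        ContinuousOn (fun t => ∫ x, u t x * φ x) (Set.Icc a b)) := by
  have hUcont : ContinuousOn (fun p : ℝ × ℝ => U p.1 p.2)
      (Set.Icc a b ×ˢ (Set.univ : Set ℝ)) :=
    hunif.continuousOn (Eventually.of_forall hcont).frequently
  have hptw : ∀ t ∈ Set.Icc a b, ∀ x : ℝ,
      Tendsto (fun n => Un n t x) atTop (nhds (U t x)) :=
    fun t ht x => hunif.tendsto_at (x := (t, x)) ⟨ht, trivial⟩
  have hUmono : ∀ t ∈ Set.Icc a b, Monotone (U t) := fun t ht x y hxy =>
    le_of_tendsto_of_tendsto' (hptw t ht x) (hptw t ht y) (fun n => hmono n t ht hxy)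
  have hUlip : ∀ t ∈ Set.Icc a b, LipschitzWith 1 (U t) := by
    intro t ht
    refine LipschitzWith.of_dist_le_mul (fun x y => ?_)
    refine le_of_tendsto ((hptw t ht x).dist (hptw t ht y)) ?_
    filter_upwards with n
    simpa using (hlip n t ht).dist_le_mul x y
  have hUC : ∀ t ∈ Set.Icc a b, ∀ x, U t x ≤ C := fun t ht x =>
    le_of_tendsto (hptw t ht x) (Eventually.of_forall fun n => hbound n t ht x)
  have hUbot : ∀ t ∈ Set.Icc a b, Tendsto (U t) atBot (nhds 0) := by
    intro t ht
    rw [Metric.tendsto_nhds]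
    intro ε hε
    obtain ⟨n, hn⟩ := (Metric.tendstoUniformlyOn_iff.1 hunif (ε/2) (by linarith)).exists
    have h2 := Metric.tendsto_nhds.1 (hzero n t ht) (ε/2) (by linarith)
    filter_upwards [h2] with x hx
    have h3 := hn (t, x) ⟨ht, trivial⟩
    calc dist (U t x) 0 ≤ dist (U t x) (Un n t x) + dist (Un n t x) 0 := dist_triangle _ _ _
      _ < ε := by linarith
  obtain ⟨u, h1, h2, h3⟩ := aux_weak a b C hC U hUcont hUmono hUlip hUbot hUC htight
  exact ⟨hUcont, u, h1, h2, h3⟩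
end

section
/- Let f : Ω × ℝ → ℝ be C² in the third variable with |∂_ω f| ≤ L and |∂_{ωω} f| ≤ L₂ uniformly, and fix (τ,y), (t,x) ∈ Ω. Define q(ω) = ∫₀^ω ∂_ω f(τ,y,s) ∂_ω f(t,x,s) ds and I(v,w) = (v−w)∫_w^v (∂_ω f(t,x,ω))² dω − (f(t,x,v) − f(t,x,w))². Then for all v, w ∈ [0,1]: (v−w)(q(v) − q(w)) ≥ I(v,w) + (f(t,x,v) − f(t,x,w))² − (2L + L₂) · sup_{ω∈[0,1]} |f(τ,y,ω) − f(t,x,ω)|. -/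
open intervalIntegral

theorem stmt_15 (T L L₂ : ℝ) (f : ℝ × ℝ → ℝ → ℝ)
    (hf : ∀ p : ℝ × ℝ, ContDiff ℝ 2 (f p))
    (hL : ∀ (p : ℝ × ℝ) (ω : ℝ), |deriv (f p) ω| ≤ L)
    (hL₂ : ∀ (p : ℝ × ℝ) (ω : ℝ), |deriv (deriv (f p)) ω| ≤ L₂)
    (τ y t x : ℝ) (hτ : (τ, y) ∈ Set.Ioo 0 T ×ˢ (Set.univ : Set ℝ))
    (ht : (t, x) ∈ Set.Ioo 0 T ×ˢ (Set.univ : Set ℝ))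
    (v w : ℝ) (hv : v ∈ Set.Icc (0:ℝ) 1) (hw : w ∈ Set.Icc (0:ℝ) 1) :
    ((v - w) * ∫ ω in w..v, deriv (f (τ, y)) ω * deriv (f (t, x)) ω) ≥
      ((v - w) * (∫ ω in w..v, (deriv (f (t, x)) ω) ^ 2) -
        (f (t, x) v - f (t, x) w) ^ 2) +
      (f (t, x) v - f (t, x) w) ^ 2 -
      (2 * L + L₂) * ⨆ ω : Set.Icc (0:ℝ) 1, |f (τ, y) ω - f (t, x) ω| := by
  set F := f (t, x) with hFdef
  set G := f (τ, y) with hGdef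
  -- basic facts
  have hL0 : 0 ≤ L := (abs_nonneg _).trans (hL (t, x) 0)
  have hL₂0 : 0 ≤ L₂ := (abs_nonneg _).trans (hL₂ (t, x) 0)
  have hFc2 : ContDiff ℝ 2 F := hf (t, x)
  have hGc2 : ContDiff ℝ 2 G := hf (τ, y)
  have hFd : ∀ ω, HasDerivAt F (deriv F ω) ω := fun ω =>
    ((hFc2.differentiable (by norm_num)) ω).hasDerivAt
  have hGd : ∀ ω, HasDerivAt G (deriv G ω) ω := fun ω =>
    ((hGc2.differentiable (by norm_num)) ω).hasDerivAt
  have hFderivC1 : ContDiff ℝ 1 (deriv F) := by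
    have h : ContDiff ℝ ((1 : WithTop ℕ∞) + 1) F := by
      have h12 : ((1 : WithTop ℕ∞) + 1) = 2 := by norm_num
      rw [h12]; exact hFc2
    exact (contDiff_succ_iff_deriv.mp h).2.2
  have hFdd : ∀ ω, HasDerivAt (deriv F) (deriv (deriv F) ω) ω := fun ω =>
    ((hFderivC1.differentiable one_ne_zero) ω).hasDerivAt
  have hcF' : Continuous (deriv F) := hFc2.continuous_deriv one_le_two
  have hcG' : Continuous (deriv G) := hGc2.continuous_deriv one_le_two
  have hcF'' : Continuous (deriv (deriv F)) := hFderivC1.continuous_deriv le_rfl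
  -- the sup
  have hcont : Continuous fun ω => |G ω - F ω| :=
    (hGc2.continuous.sub hFc2.continuous).abs
  have hbdd : BddAbove (Set.range fun ω : Set.Icc (0:ℝ) 1 => |G ↑ω - F ↑ω|) := by
    have himg : BddAbove ((fun ω => |G ω - F ω|) '' Set.Icc (0:ℝ) 1) :=
      (isCompact_Icc.image hcont).bddAbove
    rwa [Set.image_eq_range] at himg
  set M := ⨆ ω : Set.Icc (0:ℝ) 1, |G ↑ω - F ↑ω| with hMdef
  have hM : ∀ ω ∈ Set.Icc (0:ℝ) 1, |G ω - F ω| ≤ M := fun ω hω =>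
    le_ciSup hbdd ⟨ω, hω⟩
  have hM0 : 0 ≤ M := (abs_nonneg _).trans (hM 0 ⟨le_refl 0, zero_le_one⟩)
  -- integration by parts
  have hint1 : IntervalIntegrable (fun ω => deriv G ω - deriv F ω) MeasureTheory.volume w v :=
    (hcG'.sub hcF').intervalIntegrable w v
  have hint2 : IntervalIntegrable (deriv (deriv F)) MeasureTheory.volume w v :=
    hcF''.intervalIntegrable w v
  have hibp : (∫ ω in w..v, (G ω - F ω) * deriv (deriv F) ω)
      = (G v - F v) * deriv F v - (G w - F w) * deriv F w
        - ∫ ω in w..v, (deriv G ω - deriv F ω) * deriv F ω :=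
    intervalIntegral.integral_mul_deriv_eq_deriv_mul
      (fun ω _ => (hGd ω).sub (hFd ω)) (fun ω _ => hFdd ω) hint1 hint2
  have hintG : IntervalIntegrable (fun ω => deriv G ω * deriv F ω) MeasureTheory.volume w v :=
    (hcG'.mul hcF').intervalIntegrable w v
  have hintF : IntervalIntegrable (fun ω => (deriv F ω) ^ 2) MeasureTheory.volume w v :=
    ((hcF'.pow 2)).intervalIntegrable w v
  have hAB : (∫ ω in w..v, deriv G ω * deriv F ω) - (∫ ω in w..v, (deriv F ω) ^ 2)
      = ∫ ω in w..v, (deriv G ω - deriv F ω) * deriv F ω := by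
    rw [← intervalIntegral.integral_sub hintG hintF]
    congr 1; ext ω; ring
  -- bound on the interior integral
  have hvw1 : |v - w| ≤ 1 := by
    rw [abs_le]; constructor <;> [linarith [hv.1, hw.2]; linarith [hv.2, hw.1]]
  have hIbound : |∫ ω in w..v, (G ω - F ω) * deriv (deriv F) ω| ≤ M * L₂ := by
    have h1 : ‖∫ ω in w..v, (G ω - F ω) * deriv (deriv F) ω‖ ≤ M * L₂ * |v - w| := by
      apply intervalIntegral.norm_integral_le_of_norm_le_const
      intro ω hω
      have hωI : ω ∈ Set.Icc (0:ℝ) 1 :=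
        (Set.uIcc_subset_Icc hw hv) (Set.uIoc_subset_uIcc hω)
      rw [Real.norm_eq_abs, abs_mul]
      exact mul_le_mul (hM ω hωI) (hL₂ (t, x) ω) (abs_nonneg _) hM0
    calc |∫ ω in w..v, (G ω - F ω) * deriv (deriv F) ω| ≤ M * L₂ * |v - w| := h1
      _ ≤ M * L₂ * 1 := by
          have : 0 ≤ M * L₂ := mul_nonneg hM0 hL₂0
          nlinarith
      _ = M * L₂ := by ring
  -- bound on the boundary terms
  have hbv : |(G v - F v) * deriv F v| ≤ M * L := by
    rw [abs_mul]
    exact mul_le_mul (hM v hv) (hL (t, x) v) (abs_nonneg _) hM0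
  have hbw : |(G w - F w) * deriv F w| ≤ M * L := by
    rw [abs_mul]
    exact mul_le_mul (hM w hw) (hL (t, x) w) (abs_nonneg _) hM0
  -- combine
  set D := (∫ ω in w..v, deriv G ω * deriv F ω) - (∫ ω in w..v, (deriv F ω) ^ 2) with hDdef
  have hDval : D = (G v - F v) * deriv F v - (G w - F w) * deriv F w
      - ∫ ω in w..v, (G ω - F ω) * deriv (deriv F) ω := by
    rw [hAB, hibp]; ring
  have hDabs : |D| ≤ 2 * L * M + L₂ * M := by
    rw [hDval]
    have t1 := abs_sub ((G v - F v) * deriv F v - (G w - F w) * deriv F w)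
      (∫ ω in w..v, (G ω - F ω) * deriv (deriv F) ω)
    have t2 := abs_sub ((G v - F v) * deriv F v) ((G w - F w) * deriv F w)
    linarith
  have hmain : (v - w) * D ≥ -(2 * L * M + L₂ * M) := by
    have h1 : -(|v - w| * |D|) ≤ (v - w) * D := by
      rw [← abs_mul]; exact neg_abs_le _
    have h2 : |v - w| * |D| ≤ 1 * (2 * L * M + L₂ * M) :=
      mul_le_mul hvw1 hDabs (abs_nonneg _) zero_le_one
    linarith
  have hexp : (v - w) * (∫ ω in w..v, deriv G ω * deriv F ω)
      - (v - w) * (∫ ω in w..v, (deriv F ω) ^ 2) = (v - w) * D := by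
    rw [hDdef]; ring
  have hring : (2 * L + L₂) * M = 2 * L * M + L₂ * M := by ring
  linarith [hmain, hexp]
end
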